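/- Let p, q be coprime positive integers with p < q, let ℓ be a positive integer, set τ_ℓ = 2^{2ℓ-1}, and assume 3p+3q ≤ 3τ_ℓ and 3p > τ_ℓ. Then rank(A,b) = rank(A) + 1, where (A,b) denotes the matrix A augmented by the column b. -/

import Mathlib

/-- The `(3p+3q+1) × (3p+3q-τ+1)` matrix whose `n`-th column is the coefficient
vector of `x^(n-1)·(1 + x^τ)` (indices here start at 0). -/
def cornerA (p q τ : ℕ) : Matrix (Fin (3*p+3*q+1)) (Fin (3*p+3*q-τ+1)) ℚ :=
  Matrix.of fun m n => if (m : ℕ) = (n : ℕ) ∨ (m : ℕ) = (n : ℕ) + τ then 1 else 0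

/-- The coefficient vector of `1 + x^(3p) + x^(3q) + x^(3p+3q)`. -/
def cornerb (p q : ℕ) : Fin (3*p+3*q+1) → ℚ :=
  fun m => if (m : ℕ) = 0 ∨ (m : ℕ) = 3*p ∨ (m : ℕ) = 3*q ∨ (m : ℕ) = 3*p+3*q
    then 1 else 0

/-- The augmented matrix `(A, b)`. -/
def cornerAb (p q τ : ℕ) : Matrix (Fin (3*p+3*q+1)) (Fin (3*p+3*q-τ+1+1)) ℚ :=
  Matrix.of fun m n =>
    if h : (n : ℕ) < 3*p+3*q-τ+1 then cornerA p q τ m ⟨n, h⟩ else cornerb p q m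

lemma sum_pick {K : ℕ} (v : Fin K → ℚ) (a : ℕ) :
    (∑ n : Fin K, if a = (n : ℕ) then v n else 0)
      = if h : a < K then v ⟨a, h⟩ else 0 := by
  split
  · next h =>
    rw [Finset.sum_eq_single (⟨a, h⟩ : Fin K)]
    · simp
    · intro n _ hn
      rw [if_neg]
      intro he
      exact hn (by ext; simp; omega)
    · simp
  · next h =>
    apply Finset.sum_eq_zero
    intro n _
    rw [if_neg]
    intro he
    exact h (by omega)

lemma sum_pick' {K : ℕ} (v : Fin K → ℚ) (a τ : ℕ) :
    (∑ n : Fin K, if a = (n : ℕ) + τ then v n else 0)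
      = if h : τ ≤ a ∧ a - τ < K then v ⟨a - τ, h.2⟩ else 0 := by
  have : ∀ n : Fin K, (if a = (n : ℕ) + τ then v n else 0)
      = if a - τ = (n : ℕ) ∧ τ ≤ a then v n else 0 := by
    intro n
    congr 1
    simp only [eq_iff_iff]
    omega
  rw [Finset.sum_congr rfl fun n _ => this n]
  split
  · next h =>
    rw [Finset.sum_eq_single (⟨a - τ, h.2⟩ : Fin K)]
    · rw [if_pos ⟨rfl, h.1⟩]
    · intro n _ hn
      rw [if_neg]
      rintro ⟨he, -⟩
      exact hn (by ext; simp; omega)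
    · simp
  · next h =>
    apply Finset.sum_eq_zero
    intro n _
    rw [if_neg]
    rintro ⟨he, hτ⟩
    exact h ⟨hτ, by omega⟩

lemma mulVec_cornerA (p q τ : ℕ) (hτ : 0 < τ) (v : Fin (3*p+3*q-τ+1) → ℚ)
    (m : Fin (3*p+3*q+1)) :
    (cornerA p q τ).mulVec v m =
      (if h : (m : ℕ) < 3*p+3*q-τ+1 then v ⟨m, h⟩ else 0)
      + (if h : τ ≤ (m : ℕ) ∧ (m : ℕ) - τ < 3*p+3*q-τ+1 then v ⟨(m : ℕ) - τ, h.2⟩ else 0) := by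
  simp only [Matrix.mulVec, dotProduct, cornerA, Matrix.of_apply, ite_mul, one_mul,
    zero_mul]
  have : ∀ n : Fin (3*p+3*q-τ+1),
      (if (m : ℕ) = (n : ℕ) ∨ (m : ℕ) = (n : ℕ) + τ then v n else 0)
      = (if (m : ℕ) = (n : ℕ) then v n else 0) + (if (m : ℕ) = (n : ℕ) + τ then v n else 0) := by
    intro n
    by_cases h1 : (m : ℕ) = (n : ℕ) <;> by_cases h2 : (m : ℕ) = (n : ℕ) + τ <;>
      simp [h1, h2] <;> omega
  rw [Finset.sum_congr rfl fun n _ => this n, Finset.sum_add_distrib, sum_pick, sum_pick']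

lemma mulVec_cornerAb (p q τ : ℕ) (w : Fin (3*p+3*q-τ+1+1) → ℚ) (m : Fin (3*p+3*q+1)) :
    (cornerAb p q τ).mulVec w m =
      (cornerA p q τ).mulVec (fun n => w n.castSucc) m
        + cornerb p q m * w (Fin.last _) := by
  simp only [Matrix.mulVec, dotProduct, cornerAb, Matrix.of_apply]
  rw [Fin.sum_univ_castSucc]
  congr 1
  · apply Finset.sum_congr rfl
    intro n _
    rw [dif_pos (by simpa using n.isLt)]
    congr 1
  · rw [dif_neg (by simp)]

lemma cornerA_mulVec_eq_zero (p q τ : ℕ) (hτ : 0 < τ)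
    (v : Fin (3*p+3*q-τ+1) → ℚ) (hv : ∀ m, (cornerA p q τ).mulVec v m = 0) :
    v = 0 := by
  have key : ∀ k, ∀ hk : k < 3*p+3*q-τ+1, v ⟨k, hk⟩ = 0 := by
    intro k
    induction k using Nat.strong_induction_on with
    | _ k ih =>
      intro hk
      have hm : k < 3*p+3*q+1 := by omega
      have h := hv ⟨k, hm⟩
      rw [mulVec_cornerA p q τ hτ] at h
      simp only [Fin.val_mk] at h
      rw [dif_pos hk] at h
      by_cases hτk : τ ≤ k
      · rw [dif_pos ⟨hτk, by omega⟩] at h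
        rw [ih (k - τ) (by omega) (by omega)] at h
        linarith
      · rw [dif_neg (by omega)] at h
        linarith
  funext n
  have := key n n.isLt
  simpa using this

lemma cornerAb_mulVec_eq_zero (p q τ : ℕ) (hτ : 0 < τ) (hτp : τ < 3*p)
    (h3pq : 3*p < 3*q) (h3q : 3*q < 2*τ)
    (w : Fin (3*p+3*q-τ+1+1) → ℚ) (hw : ∀ m, (cornerAb p q τ).mulVec w m = 0) :
    w = 0 := by
  have heq : ∀ m : Fin (3*p+3*q+1),
      (cornerA p q τ).mulVec (fun n => w n.castSucc) m
        + cornerb p q m * w (Fin.last _) = 0 := by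
    intro m
    rw [← mulVec_cornerAb]
    exact hw m
  set c := w (Fin.last _) with hc
  set v : Fin (3*p+3*q-τ+1) → ℚ := fun n => w n.castSucc with hvdef
  have e1 : v ⟨3*q - τ, by omega⟩ = 0 := by
    have h := heq ⟨3*q - τ, by omega⟩
    rw [mulVec_cornerA p q τ hτ] at h
    simp only [Fin.val_mk] at h
    rw [dif_pos (by omega), dif_neg (by omega)] at h
    have hb : cornerb p q ⟨3*q - τ, by omega⟩ = 0 := by
      simp only [cornerb, Fin.val_mk]
      rw [if_neg (by omega)]
    rw [hb] at h
    linarith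
  have e2 : v ⟨3*q, by omega⟩ = -c := by
    have h := heq ⟨3*q, by omega⟩
    rw [mulVec_cornerA p q τ hτ] at h
    simp only [Fin.val_mk] at h
    rw [dif_pos (by omega), dif_pos ⟨by omega, by omega⟩] at h
    have hb : cornerb p q ⟨3*q, by omega⟩ = 1 := by
      simp only [cornerb, Fin.val_mk]
      rw [if_pos (by tauto)]
    rw [hb] at h
    have hve : v ⟨3*q - τ, by omega⟩ = 0 := e1
    rw [hve] at h
    linarith
  have e3 : c = 0 := by
    have h := heq ⟨3*q + τ, by omega⟩
    rw [mulVec_cornerA p q τ hτ] at h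
    simp only [Fin.val_mk] at h
    rw [dif_neg (by omega), dif_pos ⟨by omega, by omega⟩] at h
    have hb : cornerb p q ⟨3*q + τ, by omega⟩ = 0 := by
      simp only [cornerb, Fin.val_mk]
      rw [if_neg (by omega)]
    rw [hb] at h
    have hidx : (⟨3*q + τ - τ, by omega⟩ : Fin (3*p+3*q-τ+1)) = ⟨3*q, by omega⟩ := by
      simp only [Fin.mk.injEq]; omega
    rw [hidx, e2] at h
    linarith
  have hv0 : v = 0 := by
    apply cornerA_mulVec_eq_zero p q τ hτ
    intro m
    have h := heq m
    rw [e3, mul_zero, add_zero] at h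
    exact h
  funext n
  induction n using Fin.lastCases with
  | last => exact e3
  | cast i => exact congrFun hv0 i

theorem rank_succ_of_mid (p q l : ℕ) (hp : 0 < p) (hpq : p < q)
    (hco : Nat.Coprime p q) (hl : 0 < l)
    (hle : 3*p+3*q ≤ 3 * 2^(2*l-1)) (hgt : 3*p > 2^(2*l-1)) :
    (cornerAb p q (2^(2*l-1))).rank = (cornerA p q (2^(2*l-1))).rank + 1 := by
  have hτ1 : 0 < 2^(2*l-1) := Nat.pow_pos (by norm_num)
  have h3pq : 3*p < 3*q := by omega
  have h3q : 3*q < 2 * 2^(2*l-1) := by omega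
  have hAinj : Function.Injective (cornerA p q (2^(2*l-1))).mulVecLin := by
    rw [← LinearMap.ker_eq_bot, LinearMap.ker_eq_bot']
    intro v hv
    exact cornerA_mulVec_eq_zero p q _ hτ1 v (fun m => congrFun hv m)
  have hAbinj : Function.Injective (cornerAb p q (2^(2*l-1))).mulVecLin := by
    rw [← LinearMap.ker_eq_bot, LinearMap.ker_eq_bot']
    intro w hw
    exact cornerAb_mulVec_eq_zero p q _ hτ1 hgt h3pq h3q w (fun m => congrFun hw m)
  have hA : (cornerA p q (2^(2*l-1))).rank = 3*p+3*q-2^(2*l-1)+1 := by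
    rw [Matrix.rank, LinearMap.finrank_range_of_inj hAinj, Module.finrank_fin_fun]
  have hAb : (cornerAb p q (2^(2*l-1))).rank = 3*p+3*q-2^(2*l-1)+1+1 := by
    rw [Matrix.rank, LinearMap.finrank_range_of_inj hAbinj, Module.finrank_fin_fun]
  rw [hA, hAb]
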